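/- Let A₁,…,A_m and B₁,…,B_m be two sequences of finite sets such that A_i ∩ B_j = ∅ if and only if i = j. Then ∑_{i=1}^m 1/binom(a_i + b_i, b_i) ≤ 1, where a_i = |A_i| and b_i = |B_i|. -/

import Mathlib

open Finset

private lemma choose_id (a b : ℕ) (ha : 1 ≤ a) :
    a * ((a + b).choose b) = (a + b) * ((a - 1 + b).choose b) := by
  obtain ⟨a', rfl⟩ : ∃ a', a = a' + 1 := ⟨a - 1, (Nat.succ_pred_eq_of_pos ha).symm⟩
  have h1 : (a' + b + 1) * ((a' + b).choose a') = (a' + b + 1).choose (a' + 1) * (a' + 1) :=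
    Nat.add_one_mul_choose_eq (a' + b) a'
  have h2 : (a' + b).choose a' = (a' + b).choose b := by
    rw [← Nat.choose_symm (Nat.le_add_left b a')]; congr 1; omega
  have h3 : (a' + b + 1).choose (a' + 1) = (a' + b + 1).choose b := by
    rw [← Nat.choose_symm (show b ≤ a' + b + 1 by omega)]; congr 1; omega
  simp only [Nat.add_sub_cancel]
  rw [h2, h3] at h1
  rw [show a' + 1 + b = a' + b + 1 by omega, h1, Nat.mul_comm]

private lemma key_id (a b N : ℕ) (ha : 1 ≤ a) (hab : a + b ≤ N) :
    (a : ℝ) / ((a - 1 + b).choose b : ℝ) + ((N - (a + b) : ℕ) : ℝ) / ((a + b).choose b : ℝ)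
      = (N : ℝ) / ((a + b).choose b : ℝ) := by
  have c1 : (0 : ℝ) < ((a - 1 + b).choose b : ℝ) := by
    exact_mod_cast Nat.choose_pos (Nat.le_add_left b (a - 1))
  have c2 : (0 : ℝ) < ((a + b).choose b : ℝ) := by
    exact_mod_cast Nat.choose_pos (Nat.le_add_left b a)
  have hid : (a : ℝ) * ((a + b).choose b : ℝ) = ((a : ℝ) + b) * ((a - 1 + b).choose b : ℝ) := by
    exact_mod_cast choose_id a b ha
  have hcast : ((N - (a + b) : ℕ) : ℝ) = (N : ℝ) - a - b := by
    push_cast [Nat.cast_sub hab]; ring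
  rw [hcast]
  field_simp
  nlinarith [hid]

private lemma row_sum {α : Type} [DecidableEq α] (X Ai Bi : Finset α)
    (hA : Ai ⊆ X) (hB : Bi ⊆ X) (hd : Disjoint Ai Bi) (hne : Ai.Nonempty) :
    ∑ x ∈ X.filter (fun x => x ∉ Bi),
        (1 : ℝ) / (((Ai \ {x}).card + Bi.card).choose Bi.card : ℝ)
      = (X.card : ℝ) / ((Ai.card + Bi.card).choose Bi.card : ℝ) := by
  set a := Ai.card
  set b := Bi.card
  have ha : 1 ≤ a := Finset.card_pos.mpr hne
  set T := X.filter (fun x => x ∉ Bi) with hT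
  have hsplit := Finset.sum_filter_add_sum_filter_not T (fun x => x ∈ Ai)
      (fun x => (1 : ℝ) / (((Ai \ {x}).card + b).choose b : ℝ))
  have hTA : T.filter (fun x => x ∈ Ai) = Ai := by
    ext x
    simp only [hT, mem_filter]
    constructor
    · tauto
    · intro hx
      exact ⟨⟨hA hx, fun hxB => Finset.disjoint_left.mp hd hx hxB⟩, hx⟩
  have hTnA : (T.filter (fun x => x ∉ Ai)).card = X.card - (a + b) := by
    have : T.filter (fun x => x ∉ Ai) = X \ (Ai ∪ Bi) := by
      ext x
      simp only [hT, mem_filter, mem_sdiff, mem_union]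
      tauto
    rw [this, Finset.card_sdiff_of_subset (Finset.union_subset hA hB),
      Finset.card_union_of_disjoint hd]
  have h1 : ∑ x ∈ T.filter (fun x => x ∈ Ai),
      (1 : ℝ) / (((Ai \ {x}).card + b).choose b : ℝ)
      = (a : ℝ) / ((a - 1 + b).choose b : ℝ) := by
    rw [hTA]
    rw [Finset.sum_congr rfl (fun x hx => ?_)]
    · rw [Finset.sum_const, nsmul_eq_mul, mul_one_div]
    · have : (Ai \ {x}).card = a - 1 := by
        rw [Finset.sdiff_singleton_eq_erase, Finset.card_erase_of_mem hx]
      rw [this]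
  have h2 : ∑ x ∈ T.filter (fun x => x ∉ Ai),
      (1 : ℝ) / (((Ai \ {x}).card + b).choose b : ℝ)
      = ((X.card - (a + b) : ℕ) : ℝ) / ((a + b).choose b : ℝ) := by
    rw [Finset.sum_congr rfl (fun x hx => ?_)]
    · rw [Finset.sum_const, hTnA, nsmul_eq_mul, mul_one_div]
    · have hx' : x ∉ Ai := (Finset.mem_filter.mp hx).2
      have : Ai \ {x} = Ai := by
        rw [Finset.sdiff_singleton_eq_erase, Finset.erase_eq_of_notMem hx']
      rw [this]
  have hab : a + b ≤ X.card := by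
    rw [← Finset.card_union_of_disjoint hd]
    exact Finset.card_le_card (Finset.union_subset hA hB)
  rw [← hsplit, h1, h2, key_id a b X.card ha hab]


private lemma single_case {α : Type} {m : ℕ} (s : Finset (Fin m)) (A B : Fin m → Finset α)
    (h : ∀ i ∈ s, ∀ j ∈ s, Disjoint (A i) (B j) ↔ i = j)
    (i : Fin m) (hi : i ∈ s) (hAi : A i = ∅) :
    ∑ j ∈ s, (1 : ℝ) / (((A j).card + (B j).card).choose ((B j).card) : ℝ) ≤ 1 := by
  have hs : s = {i} := by
    apply Finset.eq_singleton_iff_unique_mem.mpr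
    refine ⟨hi, fun j hj => ?_⟩
    exact ((h i hi j hj).mp (by simp [hAi])).symm
  rw [hs, Finset.sum_singleton, hAi]
  simp

private lemma bollobas_aux {α : Type} [DecidableEq α] (n : ℕ) :
    ∀ {m : ℕ} (s : Finset (Fin m)) (A B : Fin m → Finset α),
      (s.biUnion fun i => A i ∪ B i).card ≤ n →
      (∀ i ∈ s, ∀ j ∈ s, Disjoint (A i) (B j) ↔ i = j) →
      ∑ i ∈ s, (1 : ℝ) / (((A i).card + (B i).card).choose ((B i).card) : ℝ) ≤ 1 := by
  induction n with
  | zero =>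
    intro m s A B hcard h
    rcases s.eq_empty_or_nonempty with rfl | ⟨i, hi⟩
    · simp
    · have hX : (s.biUnion fun i => A i ∪ B i) = ∅ := Finset.card_eq_zero.mp (Nat.le_zero.mp hcard)
      have hAi : A i = ∅ := by
        apply Finset.eq_empty_of_forall_notMem
        intro x hx
        have : x ∈ (s.biUnion fun i => A i ∪ B i) :=
          Finset.mem_biUnion.mpr ⟨i, hi, Finset.mem_union_left _ hx⟩
        simp [hX] at this
      exact single_case s A B h i hi hAi
  | succ n ih =>
    intro m s A B hcard h
    rcases s.eq_empty_or_nonempty with rfl | ⟨i₀, hi₀⟩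
    · simp
    by_cases hemp : ∃ i ∈ s, A i = ∅
    · obtain ⟨i, hi, hAi⟩ := hemp
      exact single_case s A B h i hi hAi
    push_neg at hemp
    set X := s.biUnion fun i => A i ∪ B i with hXdef
    have hAX : ∀ i ∈ s, A i ⊆ X := fun i hi =>
      fun x hx => Finset.mem_biUnion.mpr ⟨i, hi, Finset.mem_union_left _ hx⟩
    have hBX : ∀ i ∈ s, B i ⊆ X := fun i hi =>
      fun x hx => Finset.mem_biUnion.mpr ⟨i, hi, Finset.mem_union_right _ hx⟩
    have hXpos : 0 < X.card := by
      have hne : (A i₀).Nonempty := (hemp i₀ hi₀)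
      obtain ⟨x, hx⟩ := hne
      exact Finset.card_pos.mpr ⟨x, hAX i₀ hi₀ hx⟩
    -- per-element bound via IH
    have hIH : ∀ x ∈ X,
        ∑ i ∈ s.filter (fun i => x ∉ B i),
          (1 : ℝ) / (((A i \ {x}).card + (B i).card).choose ((B i).card) : ℝ) ≤ 1 := by
      intro x hx
      apply ih (s.filter (fun i => x ∉ B i)) (fun i => A i \ {x}) B
      · have hsub : ((s.filter (fun i => x ∉ B i)).biUnion
            fun i => (A i \ {x}) ∪ B i) ⊆ X.erase x := by
          intro y hy
          obtain ⟨i, hi, hyi⟩ := Finset.mem_biUnion.mp hy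
          obtain ⟨his, hxB⟩ := Finset.mem_filter.mp hi
          rw [Finset.mem_erase]
          constructor
          · intro e
            rcases Finset.mem_union.mp hyi with h1 | h1
            · exact (Finset.mem_sdiff.mp h1).2 (by simp [e])
            · exact hxB (e ▸ h1)
          · rcases Finset.mem_union.mp hyi with h1 | h1
            · exact hAX i his (Finset.mem_sdiff.mp h1).1
            · exact hBX i his h1
        calc ((s.filter (fun i => x ∉ B i)).biUnion fun i => (A i \ {x}) ∪ B i).card
            ≤ (X.erase x).card := Finset.card_le_card hsub
          _ = X.card - 1 := Finset.card_erase_of_mem hx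
          _ ≤ n := by omega
      · intro i hi j hj
        obtain ⟨his, hxBi⟩ := Finset.mem_filter.mp hi
        obtain ⟨hjs, hxBj⟩ := Finset.mem_filter.mp hj
        constructor
        · intro hdisj
          by_contra hne
          have : ¬ Disjoint (A i) (B j) := fun hd => hne ((h i his j hjs).mp hd)
          obtain ⟨y, hyA, hyB⟩ := Finset.not_disjoint_iff.mp this
          have hyx : y ≠ x := fun e => hxBj (e ▸ hyB)
          exact Finset.disjoint_left.mp hdisj
            (Finset.mem_sdiff.mpr ⟨hyA, fun hm => hyx (Finset.mem_singleton.mp hm)⟩) hyB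
        · rintro rfl
          exact Finset.disjoint_of_subset_left Finset.sdiff_subset ((h i his i his).mpr rfl)
    -- the counting identity and conclusion
    have hmain : (X.card : ℝ) *
        (∑ i ∈ s, (1 : ℝ) / (((A i).card + (B i).card).choose ((B i).card) : ℝ))
        ≤ (X.card : ℝ) := by
      calc (X.card : ℝ) * ∑ i ∈ s, (1 : ℝ) / (((A i).card + (B i).card).choose ((B i).card) : ℝ)
          = ∑ i ∈ s, (X.card : ℝ) / (((A i).card + (B i).card).choose ((B i).card) : ℝ) := by
            rw [Finset.mul_sum]; exact Finset.sum_congr rfl fun i _ => by rw [mul_one_div]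
        _ = ∑ i ∈ s, ∑ x ∈ X.filter (fun x => x ∉ B i),
              (1 : ℝ) / (((A i \ {x}).card + (B i).card).choose ((B i).card) : ℝ) := by
            refine Finset.sum_congr rfl fun i hi => ?_
            exact (row_sum X (A i) (B i) (hAX i hi) (hBX i hi) ((h i hi i hi).mpr rfl)
              (hemp i hi)).symm
        _ = ∑ x ∈ X, ∑ i ∈ s.filter (fun i => x ∉ B i),
              (1 : ℝ) / (((A i \ {x}).card + (B i).card).choose ((B i).card) : ℝ) := by
            simp_rw [Finset.sum_filter]
            exact Finset.sum_comm
        _ ≤ ∑ x ∈ X, (1 : ℝ) := Finset.sum_le_sum hIH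
        _ = (X.card : ℝ) := by simp
    have hXpos' : (0 : ℝ) < (X.card : ℝ) := by exact_mod_cast hXpos
    exact (mul_le_mul_iff_right₀ hXpos').mp (by simpa using hmain)

/-- A generalization of Bollobás's Two Families Theorem: if `A i ∩ B j = ∅` iff `i = j`,
then `∑ i, 1 / binom(|A i| + |B i|, |B i|) ≤ 1`. -/
theorem bollobas_two_families {α : Type} (m : ℕ) (A B : Fin m → Finset α)
    (h : ∀ i j, Disjoint (A i) (B j) ↔ i = j) :
    ∑ i : Fin m, (1 : ℝ) / (((A i).card + (B i).card).choose ((B i).card) : ℝ) ≤ 1 := by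
  classical
  exact bollobas_aux ((Finset.univ.biUnion fun i => A i ∪ B i).card) Finset.univ A B
    le_rfl (fun i _ j _ => h i j)
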